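/- Let R be a reduced crystallographic root system with set of positive roots R⁺ and simple roots S, and let I be a subset of S. For every positive root β in R⁺ \ R_I⁺ one has ⟨Σ_{α ∈ I} ϖ_α − Σ_{γ ∈ R_I⁺} γ , β∨⟩ ≥ 0. -/

import Mathlib

/-!
Common setup: a reduced crystallographic root system realized in a real inner
product space, together with a chosen set of simple roots.  For a root `α`,
`cpair v α = ⟨v, α∨⟩ = 2⟪v,α⟫/⟪α,α⟫` is the pairing with the coroot `α∨`, and
`sref α` is the reflection in `α`.
-/

open scoped RealInnerProductSpace
open Finset

/-- `cpair v α = ⟨v, α∨⟩ = 2⟪v,α⟫/⟪α,α⟫`, the pairing of `v` with the coroot of `α`. -/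
noncomputable def cpair {V : Type*} [NormedAddCommGroup V] [InnerProductSpace ℝ V]
    (v α : V) : ℝ := 2 * ⟪v, α⟫ / ⟪α, α⟫

/-- The reflection in the root `α`: `v ↦ v - ⟨v, α∨⟩ α`. -/
noncomputable def sref {V : Type*} [NormedAddCommGroup V] [InnerProductSpace ℝ V]
    (α : V) : V → V := fun v => v - cpair v α • α

/-- A reduced crystallographic root system in a real inner product space,
with a chosen set of simple roots (every root is an integral linear combination
of the simple roots, with coefficients all nonnegative or all nonpositive). -/
structure RCRS (V : Type*) [NormedAddCommGroup V] [InnerProductSpace ℝ V] where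
  roots : Finset V
  zero_not_mem : (0 : V) ∉ roots
  crystallographic : ∀ α ∈ roots, ∀ β ∈ roots, ∃ n : ℤ, cpair β α = (n : ℝ)
  reflect_mem : ∀ α ∈ roots, ∀ β ∈ roots, sref α β ∈ roots
  reduced : ∀ α ∈ roots, ∀ t : ℝ, t • α ∈ roots → t = 1 ∨ t = -1
  simple : Finset V
  simple_subset : simple ⊆ roots
  simple_indep : LinearIndependent ℝ ((↑) : simple → V)
  exists_coeffs : ∀ β ∈ roots, ∃ c : V → ℤ,
    ((∀ α ∈ simple, 0 ≤ c α) ∨ (∀ α ∈ simple, c α ≤ 0)) ∧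
    β = ∑ α ∈ simple, (c α : ℝ) • α

namespace RCRS

variable {V : Type*} [NormedAddCommGroup V] [InnerProductSpace ℝ V] [DecidableEq V] (Φ : RCRS V)

open Classical in
/-- `R⁺`: the set of positive roots, i.e. the roots that are nonnegative integral
linear combinations of simple roots. -/
noncomputable def posRoots : Finset V :=
  Φ.roots.filter (fun β => ∃ c : V → ℤ, (∀ α ∈ Φ.simple, 0 ≤ c α) ∧
    β = ∑ α ∈ Φ.simple, (c α : ℝ) • α)

open Classical in
/-- `R_I⁺`: the set of positive roots that are integral linear combinations of the
simple roots belonging to `I`. -/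
noncomputable def posRootsOf (I : Finset V) : Finset V :=
  Φ.posRoots.filter (fun β => ∃ c : V → ℤ, β = ∑ α ∈ I, (c α : ℝ) • α)

/-- `ρ`: the half sum of the positive roots. -/
noncomputable def rho : V := (2 : ℝ)⁻¹ • ∑ β ∈ Φ.posRoots, β

/-- `ρ^P`: the half sum of the positive roots that are not in `R_I⁺`. -/
noncomputable def rhoP (I : Finset V) : V :=
  (2 : ℝ)⁻¹ • ∑ β ∈ Φ.posRoots \ Φ.posRootsOf I, β

/-- `ϖ` is a system of fundamental weights: `⟨ϖ α, β∨⟩ = δ_{α β}` for simple `α`, `β`. -/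
def IsFundamentalWeights (ϖ : V → V) : Prop :=
  ∀ α ∈ Φ.simple, ∀ β ∈ Φ.simple, cpair (ϖ α) β = if α = β then 1 else 0

/-- The product of the reflections in the roots listed in `l`
(`wordProd [α₁, …, α_N] = s_{α₁} ∘ ⋯ ∘ s_{α_N}`). -/
noncomputable def wordProd : List V → (V → V) :=
  fun l => l.foldr (fun α f => sref α ∘ f) id

/-- Membership in the subgroup of the Weyl group generated by the reflections
`s_α`, `α ∈ I`. -/
def MemWeyl (I : Finset V) (w : V → V) : Prop :=
  ∃ l : List V, (∀ α ∈ l, α ∈ I) ∧ w = wordProd l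

/-- The length of `w` with respect to the generators `s_α`, `α ∈ I`. -/
noncomputable def lengthWeyl (I : Finset V) (w : V → V) : ℕ :=
  sInf {n | ∃ l : List V, l.length = n ∧ (∀ α ∈ l, α ∈ I) ∧ w = wordProd l}

/-- `w` is the longest element of the subgroup generated by the reflections
`s_α`, `α ∈ I`. -/
def IsLongest (I : Finset V) (w : V → V) : Prop :=
  MemWeyl I w ∧ ∀ u, MemWeyl I u → lengthWeyl I u ≤ lengthWeyl I w

end RCRS

section basic

variable {V : Type*} [NormedAddCommGroup V] [InnerProductSpace ℝ V]

lemma cpair_add (u v α : V) : cpair (u + v) α = cpair u α + cpair v α := by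
  simp only [cpair, inner_add_left]; ring

lemma cpair_smul (r : ℝ) (u α : V) : cpair (r • u) α = r * cpair u α := by
  simp only [cpair, real_inner_smul_left]; ring

lemma cpair_sum {ι : Type*} (s : Finset ι) (f : ι → V) (α : V) :
    cpair (∑ i ∈ s, f i) α = ∑ i ∈ s, cpair (f i) α := by
  classical
  induction s using Finset.induction with
  | empty => simp [cpair]
  | @insert a s h ih => rw [Finset.sum_insert h, Finset.sum_insert h, cpair_add, ih]

lemma cpair_neg (u α : V) : cpair (-u) α = - cpair u α := by
  simp only [cpair, inner_neg_left]; ring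

lemma cpair_sub (u v α : V) : cpair (u - v) α = cpair u α - cpair v α := by
  rw [sub_eq_add_neg, cpair_add, cpair_neg]; ring

lemma inner_self_ne (α : V) (h : α ≠ 0) : ⟪α, α⟫ ≠ 0 :=
  fun h0 => h (inner_self_eq_zero.mp h0)

lemma inner_self_pos' (α : V) (h : α ≠ 0) : 0 < ⟪α, α⟫ :=
  lt_of_le_of_ne real_inner_self_nonneg (Ne.symm (inner_self_ne α h))

lemma cpair_self (α : V) (h : α ≠ 0) : cpair α α = 2 := by
  have := inner_self_ne α h
  rw [cpair, mul_div_assoc, div_self this, mul_one]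

lemma isLinearMap_sref (α : V) : IsLinearMap ℝ (sref α) := by
  constructor
  · intro u v; simp only [sref, cpair_add, add_smul]; abel
  · intro r v; simp only [sref, cpair_smul, mul_smul, smul_sub]

lemma sref_fix {α v : V} (h : cpair v α = 0) : sref α v = v := by
  simp [sref, h]

lemma sref_self (α : V) (h : α ≠ 0) : sref α α = -α := by
  rw [sref, cpair_self α h, two_smul]; abel

lemma cpair_sref_right (α : V) (h : α ≠ 0) (v : V) :
    cpair (sref α v) α = - cpair v α := by
  have hA := inner_self_ne α h
  simp only [sref, cpair, inner_sub_left, real_inner_smul_left]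
  field_simp
  ring

lemma sref_sref (α : V) (h : α ≠ 0) (v : V) : sref α (sref α v) = v := by
  rw [sref, cpair_sref_right α h, sref, neg_smul]
  abel

lemma sref_inner (α : V) (h : α ≠ 0) (u v : V) :
    ⟪sref α u, sref α v⟫ = ⟪u, v⟫ := by
  have hA := inner_self_ne α h
  simp only [sref, cpair, inner_sub_left, inner_sub_right, real_inner_smul_left,
    real_inner_smul_right]
  field_simp
  rw [real_inner_comm v α]
  ring

lemma sref_neg (α v : V) : sref α (-v) = - sref α v := by
  have := (isLinearMap_sref α).mk' ; exact map_neg ((isLinearMap_sref α).mk' _) v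

end basic
set_option linter.unusedSectionVars false
namespace RCRS

variable {V : Type*} [NormedAddCommGroup V] [InnerProductSpace ℝ V] [DecidableEq V] (Φ : RCRS V)

lemma root_ne_zero {β : V} (h : β ∈ Φ.roots) : β ≠ 0 :=
  fun h0 => Φ.zero_not_mem (h0 ▸ h)

lemma cpair_int {α β : V} (hα : α ∈ Φ.roots) (hβ : β ∈ Φ.roots) :
    ∃ n : ℤ, cpair β α = (n : ℝ) := Φ.crystallographic α hα β hβ

lemma coeff_unique {c d : V → ℝ}
    (h : ∑ α ∈ Φ.simple, c α • α = ∑ α ∈ Φ.simple, d α • α) :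
    ∀ α ∈ Φ.simple, c α = d α := by
  classical
  intro α hα
  have h0 : ∑ x ∈ Φ.simple.attach, (c x - d x) • (x : V) = 0 := by
    have h1 : ∑ x ∈ Φ.simple.attach, c (x : V) • (x : V)
        = ∑ x ∈ Φ.simple.attach, d (x : V) • (x : V) := by
      rw [Finset.sum_attach Φ.simple (fun y => c y • y),
        Finset.sum_attach Φ.simple (fun y => d y • y)]
      exact h
    simp only [sub_smul, Finset.sum_sub_distrib, h1, sub_self]
  have := linearIndependent_iff'.mp Φ.simple_indep Φ.simple.attach
    (fun x => c x - d x) h0 ⟨α, hα⟩ (Finset.mem_attach _ _)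
  have h2 : c α - d α = 0 := by simpa using this
  linarith

lemma mem_posRoots {β : V} :
    β ∈ Φ.posRoots ↔ β ∈ Φ.roots ∧ ∃ c : V → ℤ, (∀ α ∈ Φ.simple, 0 ≤ c α) ∧
      β = ∑ α ∈ Φ.simple, (c α : ℝ) • α := by
  classical
  simp [posRoots, Finset.mem_filter]

lemma mem_posRootsOf {I : Finset V} {β : V} :
    β ∈ Φ.posRootsOf I ↔ β ∈ Φ.posRoots ∧ ∃ c : V → ℤ, β = ∑ α ∈ I, (c α : ℝ) • α := by
  classical
  simp [posRootsOf, Finset.mem_filter]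

lemma neg_mem {β : V} (h : β ∈ Φ.roots) : -β ∈ Φ.roots := by
  have := Φ.reflect_mem β h β h
  rwa [sref_self β (Φ.root_ne_zero h)] at this

lemma pos_or_neg {β : V} (h : β ∈ Φ.roots) : β ∈ Φ.posRoots ∨ -β ∈ Φ.posRoots := by
  obtain ⟨c, hc | hc, hrep⟩ := Φ.exists_coeffs β h
  · exact Or.inl ((Φ.mem_posRoots).mpr ⟨h, c, hc, hrep⟩)
  · refine Or.inr ((Φ.mem_posRoots).mpr ⟨Φ.neg_mem h, fun α => -c α, ?_, ?_⟩)
    · intro α hα; simpa using hc α hα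
    · rw [hrep]
      simp [Finset.sum_neg_distrib, neg_smul]

lemma not_neg_mem_posRoots {β : V} (h : β ∈ Φ.posRoots) : -β ∉ Φ.posRoots := by
  intro hneg
  obtain ⟨hr, c, hc, hrep⟩ := (Φ.mem_posRoots).mp h
  obtain ⟨hr', d, hd, hrep'⟩ := (Φ.mem_posRoots).mp hneg
  have hsum : ∑ α ∈ Φ.simple, ((c α : ℝ) + (d α : ℝ)) • α
      = ∑ α ∈ Φ.simple, (0 : ℝ) • α := by
    simp only [add_smul, Finset.sum_add_distrib, ← hrep]
    rw [← hrep']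
    simp [hrep, hrep']
  have := Φ.coeff_unique hsum
  have hβ0 : β = 0 := by
    rw [hrep]
    apply Finset.sum_eq_zero
    intro α hα
    have h1 := this α hα
    have h2 := hc α hα
    have h3 := hd α hα
    have : (c α : ℝ) = 0 := by
      have : (c α : ℝ) + (d α : ℝ) = 0 := by simpa using h1
      have h2' : (0:ℝ) ≤ (c α : ℝ) := by exact_mod_cast h2
      have h3' : (0:ℝ) ≤ (d α : ℝ) := by exact_mod_cast h3
      linarith
    simp [this]
  exact Φ.root_ne_zero hr hβ0

end RCRS
set_option linter.unusedSectionVars false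
namespace RCRS

variable {V : Type*} [NormedAddCommGroup V] [InnerProductSpace ℝ V] [DecidableEq V] (Φ : RCRS V)

lemma posRoots_subset {β : V} (h : β ∈ Φ.posRoots) : β ∈ Φ.roots :=
  ((Φ.mem_posRoots).mp h).1

lemma posRootsOf_subset {I : Finset V} {β : V} (h : β ∈ Φ.posRootsOf I) : β ∈ Φ.posRoots :=
  ((Φ.mem_posRootsOf).mp h).1

lemma ite_sum_eq {k : ℝ} {α : V} {s : Finset V} (hα : α ∈ s) :
    ∑ δ ∈ s, (if δ = α then k else 0) • δ = k • α := by
  have := Finset.sum_eq_single_of_mem (s := s)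
    (f := fun δ => (if δ = α then k else 0) • δ) α hα (by intro b _ hb; simp [hb])
  simpa using this

/-- canonical coefficients of an element of `R_I⁺`. -/
lemma posRootsOf_coeffs {I : Finset V} (hI : I ⊆ Φ.simple) {β : V} (h : β ∈ Φ.posRootsOf I) :
    ∃ c : V → ℤ, (∀ δ ∈ Φ.simple, 0 ≤ c δ) ∧ (∀ δ ∈ Φ.simple, δ ∉ I → c δ = 0) ∧
      β = ∑ δ ∈ Φ.simple, (c δ : ℝ) • δ ∧ β = ∑ δ ∈ I, (c δ : ℝ) • δ := by
  obtain ⟨hpos, d, hrepI⟩ := (Φ.mem_posRootsOf).mp h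
  obtain ⟨_, c, hc0, hrepS⟩ := (Φ.mem_posRoots).mp hpos
  have hext : β = ∑ δ ∈ Φ.simple, (if δ ∈ I then (d δ : ℝ) else 0) • δ := by
    rw [hrepI, ← Finset.sum_subset hI (fun x _ hx => by simp [hx])]
    exact Finset.sum_congr rfl (fun δ hδ => by rw [if_pos hδ])
  have huniq := Φ.coeff_unique (hrepS ▸ hext)
  refine ⟨c, hc0, ?_, hrepS, ?_⟩
  · intro δ hδ hδI
    have := huniq δ hδ
    rw [if_neg hδI] at this
    exact_mod_cast this
  · rw [hrepI]
    apply Finset.sum_congr rfl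
    intro δ hδ
    have := huniq δ (hI hδ)
    rw [if_pos hδ] at this
    rw [this]

/-- canonical coefficients of a positive root not in `R_I⁺` have a positive entry outside `I`. -/
lemma outside_coeff {I : Finset V} (hI : I ⊆ Φ.simple) {β : V} (hβ : β ∈ Φ.posRoots)
    (hβI : β ∉ Φ.posRootsOf I) :
    ∃ c : V → ℤ, (∀ δ ∈ Φ.simple, 0 ≤ c δ) ∧ β = ∑ δ ∈ Φ.simple, (c δ : ℝ) • δ ∧
      ∃ δ₀ ∈ Φ.simple, δ₀ ∉ I ∧ 0 < c δ₀ := by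
  obtain ⟨hr, c, hc0, hrepS⟩ := (Φ.mem_posRoots).mp hβ
  refine ⟨c, hc0, hrepS, ?_⟩
  by_contra hcon
  push_neg at hcon
  apply hβI
  refine (Φ.mem_posRootsOf).mpr ⟨hβ, c, ?_⟩
  rw [hrepS]
  refine (Finset.sum_subset hI ?_).symm
  intro x hx hnx
  have h1 : c x ≤ 0 := hcon x hx hnx
  have h2 := hc0 x hx
  have : c x = 0 := le_antisymm h1 h2
  simp [this]

end RCRS
set_option linter.unusedSectionVars false
namespace RCRS

variable {V : Type*} [NormedAddCommGroup V] [InnerProductSpace ℝ V] [DecidableEq V] (Φ : RCRS V)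

lemma cast_ite_sum (s : Finset V) (α : V) (k : ℤ) :
    ∑ δ ∈ s, ((if δ = α then k else 0 : ℤ) : ℝ) • δ
      = ∑ δ ∈ s, (if δ = α then (k : ℝ) else 0) • δ :=
  Finset.sum_congr rfl (fun δ _ => by split_ifs <;> simp)

lemma simple_mem_posRoots {α : V} (hα : α ∈ Φ.simple) : α ∈ Φ.posRoots := by
  refine (Φ.mem_posRoots).mpr ⟨Φ.simple_subset hα, fun δ => if δ = α then 1 else 0, ?_, ?_⟩
  · intro δ _; dsimp only; split_ifs <;> simp
  · rw [cast_ite_sum, ite_sum_eq hα]; norm_num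

lemma mem_posRootsOf_of_mem {I : Finset V} (hI : I ⊆ Φ.simple) {α : V} (hα : α ∈ I) :
    α ∈ Φ.posRootsOf I := by
  refine (Φ.mem_posRootsOf).mpr ⟨Φ.simple_mem_posRoots (hI hα), fun δ => if δ = α then 1 else 0, ?_⟩
  rw [cast_ite_sum, ite_sum_eq hα]; norm_num

/-- If a root has a representation over the simple roots with a strictly positive
coefficient somewhere, it is a positive root. -/
lemma posRoots_of_rep_pos {β : V} (hβ : β ∈ Φ.roots) (e : V → ℝ)
    (hrep : β = ∑ δ ∈ Φ.simple, e δ • δ) {δ₀ : V} (hδ₀ : δ₀ ∈ Φ.simple) (hpos : 0 < e δ₀) :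
    β ∈ Φ.posRoots ∧ ∀ d : V → ℤ,
      ((∀ δ ∈ Φ.simple, 0 ≤ d δ) ∨ (∀ δ ∈ Φ.simple, d δ ≤ 0)) →
      β = ∑ δ ∈ Φ.simple, (d δ : ℝ) • δ → (∀ δ ∈ Φ.simple, (d δ : ℝ) = e δ) := by
  have key : ∀ d : V → ℤ,
      ((∀ δ ∈ Φ.simple, 0 ≤ d δ) ∨ (∀ δ ∈ Φ.simple, d δ ≤ 0)) →
      β = ∑ δ ∈ Φ.simple, (d δ : ℝ) • δ → (∀ δ ∈ Φ.simple, (d δ : ℝ) = e δ) := by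
    intro d _ hrepd
    exact Φ.coeff_unique (hrepd ▸ hrep)
  obtain ⟨d, hd, hrepd⟩ := Φ.exists_coeffs β hβ
  have heq := key d hd hrepd
  rcases hd with hd | hd
  · exact ⟨(Φ.mem_posRoots).mpr ⟨hβ, d, hd, hrepd⟩, key⟩
  · exfalso
    have h1 : (d δ₀ : ℝ) ≤ 0 := by exact_mod_cast hd δ₀ hδ₀
    have h2 := heq δ₀ hδ₀
    linarith

/-- The reflection in a simple root `α ∈ I` permutes `R_I⁺ \ {α}`. -/
lemma sref_mem_posRootsOf {I : Finset V} (hI : I ⊆ Φ.simple) {α γ : V} (hα : α ∈ I)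
    (hγ : γ ∈ Φ.posRootsOf I) (hne : γ ≠ α) : sref α γ ∈ Φ.posRootsOf I := by
  have hαs : α ∈ Φ.simple := hI hα
  have hαr : α ∈ Φ.roots := Φ.simple_subset hαs
  have hγr : γ ∈ Φ.roots := Φ.posRoots_subset (Φ.posRootsOf_subset hγ)
  obtain ⟨c, hc0, hcI, hrepS, hrepI⟩ := Φ.posRootsOf_coeffs hI hγ
  obtain ⟨k, hk⟩ := Φ.cpair_int hαr hγr
  -- find a positive coefficient away from α
  have hδ₀ : ∃ δ₀ ∈ I, δ₀ ≠ α ∧ 0 < c δ₀ := by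
    by_contra hcon
    push_neg at hcon
    have hγeq : γ = (c α : ℝ) • α := by
      rw [hrepI]
      refine Finset.sum_eq_single_of_mem α hα ?_
      intro δ hδ hneδ
      have h1 : c δ ≤ 0 := hcon δ hδ hneδ
      have h2 : c δ = 0 := le_antisymm h1 (hc0 δ (hI hδ))
      simp [h2]
    rcases Φ.reduced α hαr (c α : ℝ) (hγeq ▸ hγr) with h1 | h1
    · exact hne (by rw [hγeq, h1, one_smul])
    · have : (0:ℝ) ≤ (c α : ℝ) := by exact_mod_cast hc0 α hαs
      rw [h1] at this; linarith
  obtain ⟨δ₀, hδ₀I, hδ₀ne, hδ₀pos⟩ := hδ₀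
  have hroot : sref α γ ∈ Φ.roots := Φ.reflect_mem α hαr γ hγr
  have hrep' : sref α γ = ∑ δ ∈ Φ.simple, ((c δ : ℝ) - (if δ = α then (k:ℝ) else 0)) • δ := by
    rw [sref, hk, hrepS]
    rw [← ite_sum_eq (k := (k : ℝ)) hαs]
    rw [← Finset.sum_sub_distrib]
    exact Finset.sum_congr rfl (fun δ _ => by rw [sub_smul])
  have hepos : 0 < (c δ₀ : ℝ) - (if δ₀ = α then (k:ℝ) else 0) := by
    rw [if_neg hδ₀ne]
    have : (0:ℝ) < (c δ₀ : ℝ) := by exact_mod_cast hδ₀pos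
    linarith
  have hmem := (Φ.posRoots_of_rep_pos hroot _ hrep' (hI hδ₀I) hepos).1
  refine (Φ.mem_posRootsOf).mpr ⟨hmem, fun δ => c δ - (if δ = α then k else 0), ?_⟩
  have : ∑ δ ∈ I, ((c δ - (if δ = α then k else 0) : ℤ) : ℝ) • δ
      = ∑ δ ∈ I, ((c δ : ℝ) - (if δ = α then (k:ℝ) else 0)) • δ :=
    Finset.sum_congr rfl (fun δ _ => by split_ifs <;> push_cast <;> ring_nf)
  rw [this]
  rw [sref, hk, hrepI, ← ite_sum_eq (k := (k : ℝ)) hα, ← Finset.sum_sub_distrib]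
  exact Finset.sum_congr rfl (fun δ _ => by rw [sub_smul])

/-- The reflection in a simple root `α ∈ I` preserves `R⁺ \ R_I⁺`. -/
lemma sref_mem_sd {I : Finset V} (hI : I ⊆ Φ.simple) {α β : V} (hα : α ∈ I)
    (hβ : β ∈ Φ.posRoots) (hβI : β ∉ Φ.posRootsOf I) :
    sref α β ∈ Φ.posRoots ∧ sref α β ∉ Φ.posRootsOf I := by
  have hαs : α ∈ Φ.simple := hI hα
  have hαr : α ∈ Φ.roots := Φ.simple_subset hαs
  have hβr : β ∈ Φ.roots := Φ.posRoots_subset hβ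
  obtain ⟨c, hc0, hrepS, δ₀, hδ₀s, hδ₀I, hδ₀pos⟩ := Φ.outside_coeff hI hβ hβI
  obtain ⟨k, hk⟩ := Φ.cpair_int hαr hβr
  have hroot : sref α β ∈ Φ.roots := Φ.reflect_mem α hαr β hβr
  have hrep' : sref α β = ∑ δ ∈ Φ.simple, ((c δ : ℝ) - (if δ = α then (k:ℝ) else 0)) • δ := by
    rw [sref, hk, hrepS]
    rw [← ite_sum_eq (k := (k : ℝ)) hαs, ← Finset.sum_sub_distrib]
    exact Finset.sum_congr rfl (fun δ _ => by rw [sub_smul])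
  have hδ₀ne : δ₀ ≠ α := fun h => hδ₀I (h ▸ hα)
  have hepos : 0 < (c δ₀ : ℝ) - (if δ₀ = α then (k:ℝ) else 0) := by
    rw [if_neg hδ₀ne]
    have : (0:ℝ) < (c δ₀ : ℝ) := by exact_mod_cast hδ₀pos
    linarith
  obtain ⟨hmem, huniq⟩ := Φ.posRoots_of_rep_pos hroot _ hrep' hδ₀s hepos
  refine ⟨hmem, ?_⟩
  intro hcon
  obtain ⟨d, hd0, hdI, hrepS', hrepI'⟩ := Φ.posRootsOf_coeffs hI hcon
  have := huniq d (Or.inl hd0) hrepS' δ₀ hδ₀s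
  rw [hdI δ₀ hδ₀s hδ₀I] at this
  rw [if_neg hδ₀ne] at this
  have : (0:ℝ) = (c δ₀ : ℝ) := by push_cast at this ⊢; linarith
  have : (0:ℝ) < 0 := by
    have h2 : (0:ℝ) < (c δ₀:ℝ) := by exact_mod_cast hδ₀pos
    linarith
  exact lt_irrefl _ this

end RCRS
section wordprod
variable {V : Type*} [NormedAddCommGroup V] [InnerProductSpace ℝ V]

lemma wordProd_nil (v : V) : RCRS.wordProd ([] : List V) v = v := rfl

lemma wordProd_cons (a : V) (l : List V) (v : V) :
    RCRS.wordProd (a :: l) v = sref a (RCRS.wordProd l v) := rfl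

lemma wordProd_append (l₁ l₂ : List V) (v : V) :
    RCRS.wordProd (l₁ ++ l₂) v = RCRS.wordProd l₁ (RCRS.wordProd l₂ v) := by
  induction l₁ with
  | nil => rfl
  | cons a t ih => simp [wordProd_cons, ih]

lemma wordProd_isLinear (l : List V) : IsLinearMap ℝ (RCRS.wordProd l) := by
  induction l with
  | nil => exact ⟨fun u v => rfl, fun r v => rfl⟩
  | cons a t ih =>
    constructor
    · intro u v
      rw [wordProd_cons, wordProd_cons, wordProd_cons, ih.1, (isLinearMap_sref a).1]
    · intro r v
      rw [wordProd_cons, wordProd_cons, ih.2, (isLinearMap_sref a).2]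

end wordprod

set_option linter.unusedSectionVars false
namespace RCRS
variable {V : Type*} [NormedAddCommGroup V] [InnerProductSpace ℝ V] [DecidableEq V] (Φ : RCRS V)

lemma wordProd_mem_roots {l : List V} (hl : ∀ α ∈ l, α ∈ Φ.roots) {γ : V} (hγ : γ ∈ Φ.roots) :
    wordProd l γ ∈ Φ.roots := by
  induction l with
  | nil => exact hγ
  | cons a t ih =>
    rw [wordProd_cons]
    exact Φ.reflect_mem a (hl a (List.mem_cons_self))
      _ (ih (fun α hα => hl α (List.mem_cons_of_mem a hα)))

lemma wordProd_inner {l : List V} (hl : ∀ α ∈ l, α ∈ Φ.roots) (u v : V) :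
    ⟪wordProd l u, wordProd l v⟫ = ⟪u, v⟫ := by
  induction l with
  | nil => rfl
  | cons a t ih =>
    rw [wordProd_cons, wordProd_cons,
      sref_inner a (Φ.root_ne_zero (hl a (List.mem_cons_self)))]
    exact ih (fun α hα => hl α (List.mem_cons_of_mem a hα))

lemma wordProd_reverse_right {l : List V} (hl : ∀ α ∈ l, α ∈ Φ.roots) (v : V) :
    wordProd l (wordProd l.reverse v) = v := by
  induction l generalizing v with
  | nil => rfl
  | cons a t ih =>
    rw [List.reverse_cons, wordProd_append, wordProd_cons]
    have h1 : wordProd [a] v = sref a v := rfl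
    rw [h1, ih (fun α hα => hl α (List.mem_cons_of_mem a hα)),
      sref_sref a (Φ.root_ne_zero (hl a (List.mem_cons_self)))]

lemma wordProd_reverse_left {l : List V} (hl : ∀ α ∈ l, α ∈ Φ.roots) (v : V) :
    wordProd l.reverse (wordProd l v) = v := by
  have := Φ.wordProd_reverse_right (l := l.reverse)
    (fun α hα => hl α (List.mem_reverse.mp hα)) v
  rwa [List.reverse_reverse] at this

lemma wordProd_sd {I : Finset V} (hI : I ⊆ Φ.simple) {l : List V} (hl : ∀ α ∈ l, α ∈ I)
    {β : V} (hβ : β ∈ Φ.posRoots) (hβI : β ∉ Φ.posRootsOf I) :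
    wordProd l β ∈ Φ.posRoots ∧ wordProd l β ∉ Φ.posRootsOf I := by
  induction l with
  | nil => exact ⟨hβ, hβI⟩
  | cons a t ih =>
    obtain ⟨h1, h2⟩ := ih (fun α hα => hl α (List.mem_cons_of_mem a hα))
    rw [wordProd_cons]
    exact Φ.sref_mem_sd hI (hl a (List.mem_cons_self)) h1 h2

lemma wordProd_intspan {I : Finset V} (hI : I ⊆ Φ.simple) {l : List V} (hl : ∀ α ∈ l, α ∈ I)
    {γ : V} (hγ : γ ∈ Φ.roots) (hspan : ∃ c : V → ℤ, γ = ∑ δ ∈ I, (c δ : ℝ) • δ) :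
    wordProd l γ ∈ Φ.roots ∧ ∃ c : V → ℤ, wordProd l γ = ∑ δ ∈ I, (c δ : ℝ) • δ := by
  induction l with
  | nil => exact ⟨hγ, hspan⟩
  | cons a t ih =>
    obtain ⟨hr, c, hrep⟩ := ih (fun α hα => hl α (List.mem_cons_of_mem a hα))
    have haI : a ∈ I := hl a (List.mem_cons_self)
    have har : a ∈ Φ.roots := Φ.simple_subset (hI haI)
    obtain ⟨k, hk⟩ := Φ.cpair_int har hr
    rw [wordProd_cons]
    refine ⟨Φ.reflect_mem a har _ hr, fun δ => c δ - (if δ = a then k else 0), ?_⟩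
    have : ∑ δ ∈ I, ((c δ - (if δ = a then k else 0) : ℤ) : ℝ) • δ
        = ∑ δ ∈ I, ((c δ : ℝ) - (if δ = a then (k:ℝ) else 0)) • δ :=
      Finset.sum_congr rfl (fun δ _ => by split_ifs <;> push_cast <;> ring_nf)
    rw [this, sref, hk, hrep, ← ite_sum_eq (k := (k : ℝ)) haI, ← Finset.sum_sub_distrib]
    exact Finset.sum_congr rfl (fun δ _ => by rw [sub_smul])

end RCRS
set_option linter.unusedSectionVars false
set_option maxHeartbeats 800000
namespace RCRS
variable {V : Type*} [NormedAddCommGroup V] [InnerProductSpace ℝ V] [DecidableEq V] (Φ : RCRS V)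

lemma exists_letter {I : Finset V} (hI : I ⊆ Φ.simple) {l : List V} (hl : ∀ α ∈ l, α ∈ I)
    {γ₀ : V} (hγ₀ : γ₀ ∈ Φ.posRootsOf I) (hpos : wordProd l γ₀ ∈ Φ.posRoots) :
    ∃ a ∈ I, wordProd l a ∈ Φ.posRoots := by
  by_contra hcon
  push_neg at hcon
  have hroots : ∀ a ∈ l, a ∈ Φ.roots := fun a ha => Φ.simple_subset (hI (hl a ha))
  have hneg : ∀ a : V, ∃ e : V → ℤ, a ∈ I →
      ((∀ δ ∈ Φ.simple, 0 ≤ e δ) ∧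
        wordProd l a = ∑ δ ∈ Φ.simple, (-(e δ : ℝ)) • δ) := by
    intro a
    by_cases haI : a ∈ I
    · have har : a ∈ Φ.roots := Φ.simple_subset (hI haI)
      have hwa : wordProd l a ∈ Φ.roots := Φ.wordProd_mem_roots hroots har
      have hmem : -(wordProd l a) ∈ Φ.posRoots := (Φ.pos_or_neg hwa).resolve_left (hcon a haI)
      obtain ⟨_, e, he0, herep⟩ := (Φ.mem_posRoots).mp hmem
      refine ⟨e, fun _ => ⟨he0, ?_⟩⟩
      have h2 : wordProd l a = -∑ δ ∈ Φ.simple, (e δ : ℝ) • δ := by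
        rw [← herep, neg_neg]
      rw [h2, ← Finset.sum_neg_distrib]
      exact Finset.sum_congr rfl (fun δ _ => by rw [neg_smul])
    · exact ⟨0, fun h => absurd h haI⟩
  choose E hE using hneg
  obtain ⟨c, hc0, hcI, hrepS, hrepI⟩ := Φ.posRootsOf_coeffs hI hγ₀
  have hLlin := wordProd_isLinear (V := V) l
  set L := hLlin.mk' with hLdef
  have hLa : ∀ v, L v = wordProd l v := fun v => rfl
  have hw : wordProd l γ₀
      = ∑ δ ∈ Φ.simple, (∑ a ∈ I, (c a : ℝ) * (-(E a δ : ℝ))) • δ := by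
    calc wordProd l γ₀ = L γ₀ := rfl
      _ = ∑ a ∈ I, L ((c a : ℝ) • a) := by rw [hrepI]; exact map_sum L _ I
      _ = ∑ a ∈ I, ∑ δ ∈ Φ.simple, ((c a : ℝ) * (-(E a δ : ℝ))) • δ := by
          refine Finset.sum_congr rfl (fun a ha => ?_)
          rw [map_smul, hLa, (hE a ha).2, Finset.smul_sum]
          exact Finset.sum_congr rfl (fun δ _ => by rw [smul_smul])
      _ = ∑ δ ∈ Φ.simple, ∑ a ∈ I, ((c a : ℝ) * (-(E a δ : ℝ))) • δ := Finset.sum_comm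
      _ = ∑ δ ∈ Φ.simple, (∑ a ∈ I, (c a : ℝ) * (-(E a δ : ℝ))) • δ := by
          refine Finset.sum_congr rfl (fun δ _ => ?_)
          rw [Finset.sum_smul]
  obtain ⟨hwr, f, hf0, hfrep⟩ := (Φ.mem_posRoots).mp hpos
  have huniq : ∀ δ ∈ Φ.simple, (f δ : ℝ) = ∑ a ∈ I, (c a : ℝ) * (-(E a δ : ℝ)) := by
    refine Φ.coeff_unique ?_
    rw [← hfrep, ← hw]
  have hzero : wordProd l γ₀ = 0 := by
    rw [hfrep]
    refine Finset.sum_eq_zero (fun δ hδ => ?_)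
    have h1 : (0:ℝ) ≤ (f δ : ℝ) := by exact_mod_cast hf0 δ hδ
    have h2 : ∑ a ∈ I, (c a : ℝ) * (-(E a δ : ℝ)) ≤ 0 := by
      refine Finset.sum_nonpos (fun a ha => ?_)
      have hc : (0:ℝ) ≤ (c a : ℝ) := by exact_mod_cast hc0 a (hI ha)
      have he : (0:ℝ) ≤ (E a δ : ℝ) := by exact_mod_cast (hE a ha).1 δ hδ
      nlinarith
    have : (f δ : ℝ) = 0 := le_antisymm (by rw [huniq δ hδ]; exact h2) h1
    rw [this, zero_smul]
  exact Φ.root_ne_zero hwr hzero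

lemma descend {I : Finset V} (hI : I ⊆ Φ.simple) :
    ∀ n : ℕ, ∀ l : List V, (∀ α ∈ l, α ∈ I) →
      ((Φ.posRootsOf I).filter (fun γ => wordProd l γ ∈ Φ.posRoots)).card ≤ n →
      ∃ l' : List V, (∀ α ∈ l', α ∈ I) ∧
        ∀ γ ∈ Φ.posRootsOf I, wordProd l' γ ∉ Φ.posRoots := by
  intro n
  induction n with
  | zero =>
    intro l hl hcard
    refine ⟨l, hl, fun γ hγ hp => ?_⟩
    have : γ ∈ (Φ.posRootsOf I).filter (fun γ => wordProd l γ ∈ Φ.posRoots) :=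
      Finset.mem_filter.mpr ⟨hγ, hp⟩
    have := Finset.card_pos.mpr ⟨γ, this⟩
    omega
  | succ n ih =>
    intro l hl hcard
    by_cases hempty : ((Φ.posRootsOf I).filter (fun γ => wordProd l γ ∈ Φ.posRoots)) = ∅
    · refine ⟨l, hl, fun γ hγ hp => ?_⟩
      have : γ ∈ (Φ.posRootsOf I).filter (fun γ => wordProd l γ ∈ Φ.posRoots) :=
        Finset.mem_filter.mpr ⟨hγ, hp⟩
      simp [hempty] at this
    · obtain ⟨γ₀, hγ₀mem⟩ := Finset.nonempty_iff_ne_empty.mpr hempty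
      obtain ⟨hγ₀, hγ₀pos⟩ := Finset.mem_filter.mp hγ₀mem
      obtain ⟨a, haI, hapos⟩ := Φ.exists_letter hI hl hγ₀ hγ₀pos
      have haS : a ∈ Φ.simple := hI haI
      have har : a ∈ Φ.roots := Φ.simple_subset haS
      have hane : a ≠ 0 := Φ.root_ne_zero har
      set l' := l ++ [a] with hl'def
      have hl' : ∀ α ∈ l', α ∈ I := by
        intro α hα
        rcases List.mem_append.mp hα with h | h
        · exact hl α h
        · rw [List.mem_singleton.mp h]; exact haI
      have hword : ∀ v, wordProd l' v = wordProd l (sref a v) := by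
        intro v; rw [hl'def, wordProd_append]; rfl
      -- the injection
      have hmaps : ∀ γ ∈ (Φ.posRootsOf I).filter (fun γ => wordProd l' γ ∈ Φ.posRoots),
          sref a γ ∈ ((Φ.posRootsOf I).filter
            (fun γ => wordProd l γ ∈ Φ.posRoots)).erase a := by
        intro γ hγmem
        obtain ⟨hγI, hγpos⟩ := Finset.mem_filter.mp hγmem
        rw [hword] at hγpos
        have hγa : γ ≠ a := by
          intro h
          rw [h, sref_self a hane] at hγpos
          have : wordProd l (-a) = -(wordProd l a) :=
            map_neg ((wordProd_isLinear (V := V) l).mk' : V →ₗ[ℝ] V) a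
          rw [this] at hγpos
          exact Φ.not_neg_mem_posRoots hapos hγpos
        have h1 : sref a γ ∈ Φ.posRootsOf I := Φ.sref_mem_posRootsOf hI haI hγI hγa
        refine Finset.mem_erase.mpr ⟨?_, Finset.mem_filter.mpr ⟨h1, hγpos⟩⟩
        intro h
        have hγeq : γ = sref a a := by
          conv_lhs => rw [← sref_sref a hane γ]
          rw [h]
        rw [sref_self a hane] at hγeq
        have hγp : γ ∈ Φ.posRoots := Φ.posRootsOf_subset hγI
        have : -γ = a := by rw [hγeq, neg_neg]
        have : -γ ∈ Φ.posRoots := by rw [this]; exact Φ.simple_mem_posRoots haS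
        exact Φ.not_neg_mem_posRoots hγp this
      have hinj : Set.InjOn (sref a)
          ((Φ.posRootsOf I).filter (fun γ => wordProd l' γ ∈ Φ.posRoots)) := by
        intro x _ y _ hxy
        have := congrArg (sref a) hxy
        rwa [sref_sref a hane, sref_sref a hane] at this
      have hcard' := Finset.card_le_card_of_injOn (sref a) hmaps hinj
      have hamem : a ∈ (Φ.posRootsOf I).filter (fun γ => wordProd l γ ∈ Φ.posRoots) :=
        Finset.mem_filter.mpr ⟨Φ.mem_posRootsOf_of_mem hI haI, hapos⟩
      have herase := Finset.card_erase_of_mem hamem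
      have : ((Φ.posRootsOf I).filter (fun γ => wordProd l' γ ∈ Φ.posRoots)).card ≤ n := by
        omega
      exact ih l' hl' this

lemma exists_word {I : Finset V} (hI : I ⊆ Φ.simple) :
    ∃ l : List V, (∀ α ∈ l, α ∈ I) ∧
      ∀ γ ∈ Φ.posRootsOf I, wordProd l γ ∉ Φ.posRoots :=
  Φ.descend hI ((Φ.posRootsOf I).filter
    (fun γ => wordProd ([] : List V) γ ∈ Φ.posRoots)).card [] (by simp) le_rfl

end RCRS
set_option linter.unusedSectionVars false
set_option maxHeartbeats 1000000
namespace RCRS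
variable {V : Type*} [NormedAddCommGroup V] [InnerProductSpace ℝ V] [DecidableEq V] (Φ : RCRS V)

lemma word_image_posI {I : Finset V} (hI : I ⊆ Φ.simple) {l : List V} (hl : ∀ α ∈ l, α ∈ I)
    (hprop : ∀ γ ∈ Φ.posRootsOf I, wordProd l γ ∉ Φ.posRoots)
    {γ : V} (hγ : γ ∈ Φ.posRootsOf I) : -(wordProd l γ) ∈ Φ.posRootsOf I := by
  have hγr : γ ∈ Φ.roots := Φ.posRoots_subset (Φ.posRootsOf_subset hγ)
  have hspan : ∃ c : V → ℤ, γ = ∑ δ ∈ I, (c δ : ℝ) • δ := ((Φ.mem_posRootsOf).mp hγ).2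
  obtain ⟨hxr, c, hxspan⟩ := Φ.wordProd_intspan hI hl hγr hspan
  have hxpos : -(wordProd l γ) ∈ Φ.posRoots := (Φ.pos_or_neg hxr).resolve_left (hprop γ hγ)
  refine (Φ.mem_posRootsOf).mpr ⟨hxpos, fun δ => -(c δ), ?_⟩
  rw [hxspan, ← Finset.sum_neg_distrib]
  exact Finset.sum_congr rfl (fun δ _ => by push_cast; rw [neg_smul])

lemma word_inv_posI {I : Finset V} (hI : I ⊆ Φ.simple) {l : List V} (hl : ∀ α ∈ l, α ∈ I)
    (hprop : ∀ γ ∈ Φ.posRootsOf I, wordProd l γ ∉ Φ.posRoots)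
    {δ : V} (hδ : δ ∈ Φ.posRootsOf I) : wordProd l.reverse (-δ) ∈ Φ.posRootsOf I := by
  have hlr : ∀ α ∈ l.reverse, α ∈ I := fun α hα => hl α (List.mem_reverse.mp hα)
  have hlroots : ∀ α ∈ l, α ∈ Φ.roots := fun α hα => Φ.simple_subset (hI (hl α hα))
  have hδr : δ ∈ Φ.roots := Φ.posRoots_subset (Φ.posRootsOf_subset hδ)
  have hnr : -δ ∈ Φ.roots := Φ.neg_mem hδr
  obtain ⟨d, hδspan⟩ := ((Φ.mem_posRootsOf).mp hδ).2
  have hnspan : ∃ c : V → ℤ, -δ = ∑ x ∈ I, (c x : ℝ) • x := by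
    refine ⟨fun x => -(d x), ?_⟩
    rw [hδspan, ← Finset.sum_neg_distrib]
    exact Finset.sum_congr rfl (fun x _ => by push_cast; rw [neg_smul])
  obtain ⟨hxr, c, hxspan⟩ := Φ.wordProd_intspan hI hlr hnr hnspan
  set x := wordProd l.reverse (-δ) with hxdef
  have hback : wordProd l x = -δ := Φ.wordProd_reverse_right hlroots (-δ)
  rcases Φ.pos_or_neg hxr with hxpos | hxneg
  · exact (Φ.mem_posRootsOf).mpr ⟨hxpos, c, hxspan⟩
  · exfalso
    have hnx : -x ∈ Φ.posRootsOf I := by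
      refine (Φ.mem_posRootsOf).mpr ⟨hxneg, fun y => -(c y), ?_⟩
      rw [hxspan, ← Finset.sum_neg_distrib]
      exact Finset.sum_congr rfl (fun y _ => by push_cast; rw [neg_smul])
    have := hprop (-x) hnx
    have hwx : wordProd l (-x) = δ := by
      have : wordProd l (-x) = -(wordProd l x) :=
        map_neg ((wordProd_isLinear (V := V) l).mk' : V →ₗ[ℝ] V) x
      rw [this, hback, neg_neg]
    rw [hwx] at this
    exact this (Φ.posRootsOf_subset hδ)

lemma word_Q {I : Finset V} (hI : I ⊆ Φ.simple) {l : List V} (hl : ∀ α ∈ l, α ∈ I)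
    (hprop : ∀ γ ∈ Φ.posRootsOf I, wordProd l γ ∉ Φ.posRoots) :
    wordProd l (∑ γ ∈ Φ.posRootsOf I, γ) = -∑ γ ∈ Φ.posRootsOf I, γ := by
  have hlroots : ∀ α ∈ l, α ∈ Φ.roots := fun α hα => Φ.simple_subset (hI (hl α hα))
  have h1 : wordProd l (∑ γ ∈ Φ.posRootsOf I, γ) = ∑ γ ∈ Φ.posRootsOf I, wordProd l γ :=
    map_sum ((wordProd_isLinear (V := V) l).mk' : V →ₗ[ℝ] V) _ _
  rw [h1, ← Finset.sum_neg_distrib]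
  refine Finset.sum_nbij' (fun γ => -(wordProd l γ)) (fun δ => wordProd l.reverse (-δ))
    (fun γ hγ => Φ.word_image_posI hI hl hprop hγ)
    (fun δ hδ => Φ.word_inv_posI hI hl hprop hδ) ?_ ?_ ?_
  · intro γ hγ
    rw [neg_neg, Φ.wordProd_reverse_left hlroots]
  · intro δ hδ
    rw [Φ.wordProd_reverse_right hlroots, neg_neg]
  · intro γ hγ
    rw [neg_neg]

lemma cpair_mu {I : Finset V} (hI : I ⊆ Φ.simple) {ϖ : V → V} (hϖ : Φ.IsFundamentalWeights ϖ)
    {a : V} (ha : a ∈ I) : cpair (∑ α ∈ I, ϖ α) a = 1 := by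
  rw [cpair_sum]
  have : ∀ α ∈ I, cpair (ϖ α) a = if α = a then 1 else 0 :=
    fun α hα => hϖ α (hI hα) a (hI ha)
  rw [Finset.sum_congr rfl this, Finset.sum_ite_eq' I a (fun _ => (1:ℝ)), if_pos ha]

lemma cpair_Q {I : Finset V} (hI : I ⊆ Φ.simple) {a : V} (ha : a ∈ I) :
    cpair (∑ γ ∈ Φ.posRootsOf I, γ) a = 2 := by
  have haS : a ∈ Φ.simple := hI ha
  have har : a ∈ Φ.roots := Φ.simple_subset haS
  have hane : a ≠ 0 := Φ.root_ne_zero har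
  have haP : a ∈ Φ.posRootsOf I := Φ.mem_posRootsOf_of_mem hI ha
  set Q := ∑ γ ∈ Φ.posRootsOf I, γ with hQ
  have h1 : sref a Q = ∑ γ ∈ Φ.posRootsOf I, sref a γ :=
    map_sum ((isLinearMap_sref a).mk' : V →ₗ[ℝ] V) _ _
  have h2 : ∑ γ ∈ (Φ.posRootsOf I).erase a, sref a γ = ∑ γ ∈ (Φ.posRootsOf I).erase a, γ := by
    refine Finset.sum_nbij' (sref a) (sref a) ?_ ?_ ?_ ?_ ?_
    · intro γ hγ
      obtain ⟨hγa, hγI⟩ := Finset.mem_erase.mp hγ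
      refine Finset.mem_erase.mpr ⟨?_, Φ.sref_mem_posRootsOf hI ha hγI hγa⟩
      intro h
      have hγeq : γ = sref a a := by
        conv_lhs => rw [← sref_sref a hane γ]
        rw [h]
      rw [sref_self a hane] at hγeq
      have hγp : γ ∈ Φ.posRoots := Φ.posRootsOf_subset hγI
      have hna : -γ ∈ Φ.posRoots := by
        rw [hγeq, neg_neg]; exact Φ.simple_mem_posRoots haS
      exact Φ.not_neg_mem_posRoots hγp hna
    · intro γ hγ
      obtain ⟨hγa, hγI⟩ := Finset.mem_erase.mp hγ
      refine Finset.mem_erase.mpr ⟨?_, Φ.sref_mem_posRootsOf hI ha hγI hγa⟩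
      intro h
      have hγeq : γ = sref a a := by
        conv_lhs => rw [← sref_sref a hane γ]
        rw [h]
      rw [sref_self a hane] at hγeq
      have hγp : γ ∈ Φ.posRoots := Φ.posRootsOf_subset hγI
      have hna : -γ ∈ Φ.posRoots := by
        rw [hγeq, neg_neg]; exact Φ.simple_mem_posRoots haS
      exact Φ.not_neg_mem_posRoots hγp hna
    · intro γ _; rw [sref_sref a hane]
    · intro γ _; rw [sref_sref a hane]
    · intro γ _; rfl
  have h3 : sref a Q = Q - (2:ℝ) • a := by
    rw [h1, ← Finset.add_sum_erase _ (fun γ => sref a γ) haP, sref_self a hane, h2, hQ,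
      ← Finset.add_sum_erase _ (fun γ => γ) haP, two_smul]
    abel
  have h4 : sref a Q = Q - cpair Q a • a := rfl
  have h6 : Q - cpair Q a • a = Q - (2:ℝ) • a := h4.symm.trans h3
  have h7 : cpair Q a • a = (2:ℝ) • a := sub_right_inj.mp h6
  have h5 : (cpair Q a - 2) • a = 0 := by
    rw [sub_smul, h7, sub_self]
  rcases smul_eq_zero.mp h5 with h | h
  · linarith [h]
  · exact absurd h hane

end RCRS
/-- For a subset `I ⊆ S` of the simple roots and every positive root
`β ∈ R⁺ \ R_I⁺`, one has `⟨Σ_{α ∈ I} ϖ_α − Σ_{γ ∈ R_I⁺} γ, β∨⟩ ≥ 0`. -/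
theorem klt_flag_ineq' {V : Type*} [NormedAddCommGroup V] [InnerProductSpace ℝ V] [DecidableEq V]
    (Φ : RCRS V)
    (I : Finset V) (hI : I ⊆ Φ.simple)
    (ϖ : V → V) (hϖ : Φ.IsFundamentalWeights ϖ) :
    ∀ β ∈ Φ.posRoots \ Φ.posRootsOf I,
      0 ≤ cpair ((∑ α ∈ I, ϖ α) - ∑ γ ∈ Φ.posRootsOf I, γ) β := by
  intro β hβ
  obtain ⟨hβpos, hβnI⟩ := Finset.mem_sdiff.mp hβ
  obtain ⟨l, hl, hprop⟩ := Φ.exists_word hI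
  have hlroots : ∀ α ∈ l, α ∈ Φ.roots := fun α hα => Φ.simple_subset (hI (hl α hα))
  -- notation
  have hfix : ∀ m : List V, (∀ α ∈ m, α ∈ I) →
      RCRS.wordProd m ((2:ℝ) • (∑ α ∈ I, ϖ α) - ∑ γ ∈ Φ.posRootsOf I, γ)
        = (2:ℝ) • (∑ α ∈ I, ϖ α) - ∑ γ ∈ Φ.posRootsOf I, γ := by
    intro m hm
    induction m with
    | nil => rfl
    | cons a t ih =>
      have haI : a ∈ I := hm a (List.mem_cons_self)
      rw [wordProd_cons, ih (fun α hα => hm α (List.mem_cons_of_mem a hα)), sref_fix]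
      rw [cpair_sub, cpair_smul, Φ.cpair_mu hI hϖ haI, Φ.cpair_Q hI haI]
      ring
  have hQneg : RCRS.wordProd l (∑ γ ∈ Φ.posRootsOf I, γ) = -∑ γ ∈ Φ.posRootsOf I, γ :=
    Φ.word_Q hI hl hprop
  have hLlin := wordProd_isLinear (V := V) l
  have h2 : (2:ℝ) • (RCRS.wordProd l (∑ α ∈ I, ϖ α))
      = (2:ℝ) • (∑ α ∈ I, ϖ α) - (2:ℝ) • (∑ γ ∈ Φ.posRootsOf I, γ) := by
    have e1 : RCRS.wordProd l ((2:ℝ) • (∑ α ∈ I, ϖ α))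
        = (2:ℝ) • RCRS.wordProd l (∑ α ∈ I, ϖ α) := hLlin.2 _ _
    have e0 : (2:ℝ) • (∑ α ∈ I, ϖ α)
        = ((2:ℝ) • (∑ α ∈ I, ϖ α) - ∑ γ ∈ Φ.posRootsOf I, γ) + ∑ γ ∈ Φ.posRootsOf I, γ := by
      abel
    have e2 : RCRS.wordProd l ((2:ℝ) • (∑ α ∈ I, ϖ α))
        = RCRS.wordProd l ((2:ℝ) • (∑ α ∈ I, ϖ α) - ∑ γ ∈ Φ.posRootsOf I, γ)
          + RCRS.wordProd l (∑ γ ∈ Φ.posRootsOf I, γ) := by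
      conv_lhs => rw [e0]
      exact hLlin.1 _ _
    rw [← e1, e2, hfix l hl, hQneg]
    module
  have hwmu : RCRS.wordProd l (∑ α ∈ I, ϖ α)
      = (∑ α ∈ I, ϖ α) - ∑ γ ∈ Φ.posRootsOf I, γ := by
    apply smul_right_injective V (two_ne_zero' ℝ)
    show (2:ℝ) • RCRS.wordProd l (∑ α ∈ I, ϖ α)
      = (2:ℝ) • ((∑ α ∈ I, ϖ α) - ∑ γ ∈ Φ.posRootsOf I, γ)
    rw [h2, smul_sub]
  -- transport β
  have hlr : ∀ α ∈ l.reverse, α ∈ I := fun α hα => hl α (List.mem_reverse.mp hα)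
  obtain ⟨hδpos, hδnI⟩ := Φ.wordProd_sd hI hlr hβpos hβnI
  have hβback : RCRS.wordProd l (RCRS.wordProd l.reverse β) = β :=
    Φ.wordProd_reverse_right hlroots β
  have hδr : RCRS.wordProd l.reverse β ∈ Φ.roots := Φ.posRoots_subset hδpos
  have hcp : cpair ((∑ α ∈ I, ϖ α) - ∑ γ ∈ Φ.posRootsOf I, γ) β
      = cpair (∑ α ∈ I, ϖ α) (RCRS.wordProd l.reverse β) := by
    rw [← hwmu]
    conv_lhs => rw [← hβback]
    simp only [cpair]
    rw [Φ.wordProd_inner hlroots, Φ.wordProd_inner hlroots]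
  rw [hcp]
  -- nonnegativity of the pairing of the dominant weight with a positive root
  have hδne : RCRS.wordProd l.reverse β ≠ 0 := Φ.root_ne_zero hδr
  have hδself : 0 < ⟪RCRS.wordProd l.reverse β, RCRS.wordProd l.reverse β⟫ :=
    inner_self_pos' _ hδne
  have hnum : 0 ≤ ⟪∑ α ∈ I, ϖ α, RCRS.wordProd l.reverse β⟫ := by
    obtain ⟨_, c, hc0, hrep⟩ := (Φ.mem_posRoots).mp hδpos
    rw [hrep, inner_sum]
    refine Finset.sum_nonneg (fun α hα => ?_)
    rw [real_inner_smul_right]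
    have hαr : α ∈ Φ.roots := Φ.simple_subset hα
    have hαself : 0 < ⟪α, α⟫ := inner_self_pos' α (Φ.root_ne_zero hαr)
    have h1 : (0:ℝ) ≤ (c α : ℝ) := by exact_mod_cast hc0 α hα
    have h2 : 0 ≤ ⟪∑ α' ∈ I, ϖ α', α⟫ := by
      rw [sum_inner]
      refine Finset.sum_nonneg (fun α' hα' => ?_)
      have h3 := hϖ α' (hI hα') α hα
      have h4 : ⟪ϖ α', α⟫ = cpair (ϖ α') α * ⟪α, α⟫ / 2 := by
        rw [cpair]
        field_simp
      rw [h4, h3]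
      split_ifs
      · positivity
      · simp
    positivity
  rw [cpair]
  positivity
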